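/- arXiv:2401.13316 — 3 statements merged into one kernel-verified Lean document; each statement's English description precedes it below -/
import Mathlib

section
/- Let E be a real inner product space, let g_1, …, g_l : E → ℝ be convex functions that are differentiable at a point x̄, let S = {x ∈ E : g_i(x) ≤ 0 for all i = 1, …, l}, and assume x̄ ∈ S. Then the tangent cone is contained in the linearization cone: for every y ∈ T_S(x̄) and every index i with g_i(x̄) = 0, one has g_i′(x̄)(y) ≤ 0; that is, T_S(x̄) ⊆ C_S(x̄) := {y ∈ E : g_i′(x̄)(y) ≤ 0 for all i with g_i(x̄) = 0}. -/
/-- The tangent cone of `S` at `p`: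
`{v : ∃ t > 0, p + t • v ∈ interior S} ∪ {0}`. -/
def tangentCone' {E : Type*} [NormedAddCommGroup E] [InnerProductSpace ℝ E]
    (S : Set E) (p : E) : Set E :=
  {v | ∃ t : ℝ, 0 < t ∧ p + t • v ∈ interior S} ∪ {0}

/-- Gradient inequality for convex functions: `f'(a)(b - a) ≤ f b - f a`. -/
lemma grad_ineq {E : Type*} [NormedAddCommGroup E] [NormedSpace ℝ E]
    (f : E → ℝ) (f' : E →L[ℝ] ℝ) (a b : E)
    (hconv : ConvexOn ℝ Set.univ f) (hd : HasFDerivAt f f' a) :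
    f' (b - a) ≤ f b - f a := by
  set w := b - a with hw
  have hline : HasDerivAt (fun s : ℝ => a + s • w) w 0 := by
    simpa using ((hasDerivAt_id (0 : ℝ)).smul_const w).const_add a
  have hcomp : HasDerivAt (fun s : ℝ => f (a + s • w)) (f' w) 0 := by
    have hd' : HasFDerivAt f f' (a + (0:ℝ) • w) := by simpa using hd
    have := hd'.comp_hasDerivAt (0 : ℝ) hline
    exact this
  have htend := hasDerivAt_iff_tendsto_slope.mp hcomp
  have htend' : Filter.Tendsto (slope (fun s : ℝ => f (a + s • w)) 0)
      (nhdsWithin 0 (Set.Ioi 0)) (nhds (f' w)) :=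
    htend.mono_left (nhdsWithin_mono 0 (fun s hs => ne_of_gt hs))
  refine le_of_tendsto htend' ?_
  filter_upwards [self_mem_nhdsWithin,
    Ioo_mem_nhdsGT_of_mem (by norm_num : (0:ℝ) ∈ Set.Ico 0 1)] with s hs hs1
  have hs0 : (0:ℝ) < s := hs
  have hs1' : s ≤ 1 := le_of_lt hs1.2
  have hkey : f (a + s • w) ≤ (1 - s) * f a + s * f b := by
    have := hconv.2 (Set.mem_univ a) (Set.mem_univ b)
      (by linarith : (0:ℝ) ≤ 1 - s) (le_of_lt hs0) (by ring)
    have heq : (1 - s) • a + s • b = a + s • w := by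
      rw [hw]; module
    simpa [heq] using this
  have : slope (fun s : ℝ => f (a + s • w)) 0 s
      = (f (a + s • w) - f a) / s := by
    simp [slope_def_field]
  rw [this]
  rw [div_le_iff₀ hs0]
  nlinarith [hkey]

/-- For a feasible set `S = {x : gᵢ(x) ≤ 0, i = 1,…,l}` defined by convex
functions differentiable at `xb ∈ S`, the tangent cone at `xb` is contained in
the linearization cone `C_S(xb) = {y : gᵢ'(xb)(y) ≤ 0 for all active i}`. -/
theorem tangentCone_subset_linearizationCone
    {E : Type*} [NormedAddCommGroup E] [InnerProductSpace ℝ E]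
    (l : ℕ) (g : Fin l → E → ℝ) (g' : Fin l → E →L[ℝ] ℝ) (xb : E)
    (hconv : ∀ i, ConvexOn ℝ Set.univ (g i))
    (hdiff : ∀ i, HasFDerivAt (g i) (g' i) xb)
    (S : Set E) (hS : S = {x : E | ∀ i, g i x ≤ 0}) (hxb : xb ∈ S) :
    tangentCone' S xb ⊆ {y : E | ∀ i, g i xb = 0 → g' i y ≤ 0} := by
  intro y hy i hi
  rcases hy with ⟨t, ht, hmem⟩ | hy0
  · have hx : xb + t • y ∈ S := interior_subset hmem
    rw [hS] at hx
    have hgi : g i (xb + t • y) ≤ 0 := hx i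
    have h1 : (g' i) (t • y) ≤ g i (xb + t • y) - g i xb := by
      have := grad_ineq (g i) (g' i) xb (xb + t • y) (hconv i) (hdiff i)
      simpa using this
    have h2 : t * (g' i) y ≤ 0 := by
      have : (g' i) (t • y) = t * (g' i) y := by simp
      rw [this] at h1
      linarith [hgi, h1, hi.ge, hi.le]
    nlinarith
  · simp at hy0
    simp [hy0]
end

section
/- (Fritz John conditions) Let E be a finite-dimensional real inner product space, let f : E → ℝ and g_1, …, g_l : E → ℝ be differentiable functions with each g_i convex, let S = {x ∈ E : g_i(x) ≤ 0 for all i = 1, …, l}, and let x̄ ∈ S be a local minimizer of f on S (i.e. there is a neighborhood U of x̄ with f(x̄) ≤ f(x) for all x ∈ S ∩ U). Then there exist real numbers λ_0, λ_1, …, λ_l, not all zero, such that λ_0·grad f(x̄) + ∑_{i=1}^l λ_i·grad g_i(x̄) = 0, λ_i ≥ 0 for all i = 0, 1, …, l, and λ_i·g_i(x̄) = 0 for all i = 1, …, l. -/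
open Filter Topology

/-- If a function of one real variable has negative derivative at `0`, then its values are
eventually smaller than its value at `0` along `𝓝[>] 0`. -/
lemma fj_aux_eventually_lt {φ : ℝ → ℝ} {L : ℝ} (hφ : HasDerivAt φ L 0) (hL : L < 0) :
    ∀ᶠ t in 𝓝[>] (0:ℝ), φ t < φ 0 := by
  have hs := hasDerivAt_iff_tendsto_slope.mp hφ
  have hs' : Tendsto (slope φ 0) (𝓝[>] (0:ℝ)) (𝓝 L) :=
    hs.mono_left (nhdsWithin_mono _ (fun x hx => ne_of_gt hx))
  have hneg : ∀ᶠ t in 𝓝[>] (0:ℝ), slope φ 0 t < 0 := hs'.eventually_lt_const hL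
  filter_upwards [hneg, self_mem_nhdsWithin] with t ht ht0
  rw [slope_def_field] at ht
  have ht0' : (0:ℝ) < t := ht0
  rw [div_neg_iff] at ht
  rcases ht with ⟨h1, h2⟩ | ⟨h1, h2⟩
  · linarith
  · linarith

/-- Directional derivative from a gradient. -/
lemma fj_aux_dirderiv {E : Type*} [NormedAddCommGroup E] [InnerProductSpace ℝ E]
    [CompleteSpace E] {h : E → ℝ} {v xb d : E} (hh : HasGradientAt h v xb) :
    HasDerivAt (fun t : ℝ => h (xb + t • d)) (inner ℝ v d : ℝ) 0 := by
  have hline : HasDerivAt (fun t : ℝ => xb + t • d) d 0 := by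
    simpa using ((hasDerivAt_id (0:ℝ)).smul_const d).const_add xb
  have hF : HasFDerivAt h (InnerProductSpace.toDual ℝ E v) xb :=
    hasGradientAt_iff_hasFDerivAt.mp hh
  have hF' : HasFDerivAt h (InnerProductSpace.toDual ℝ E v)
      ((fun t : ℝ => xb + t • d) 0) := by simpa using hF
  have := hF'.comp_hasDerivAt (0:ℝ) hline
  simp only [InnerProductSpace.toDual_apply_apply] at this
  exact this

/-- Fritz John necessary optimality conditions: if `xb` is a local minimizer of
a differentiable `f` on `S = {x : gᵢ(x) ≤ 0, i = 1,…,l}` with the `gᵢ` convex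
and differentiable, then there are multipliers `λ₀, λ₁, …, λ_l ≥ 0`, not all
zero, with `λ₀ grad f(xb) + ∑ᵢ λᵢ grad gᵢ(xb) = 0` and `λᵢ gᵢ(xb) = 0`. -/
theorem fritz_john_conditions
    {E : Type*} [NormedAddCommGroup E] [InnerProductSpace ℝ E]
    [FiniteDimensional ℝ E]
    (l : ℕ) (f : E → ℝ) (g : Fin l → E → ℝ)
    (gradf : E) (gradg : Fin l → E) (xb : E)
    (hf : HasGradientAt f gradf xb)
    (hg : ∀ i, HasGradientAt (g i) (gradg i) xb)
    (hgconv : ∀ i, ConvexOn ℝ Set.univ (g i))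
    (S : Set E) (hS : S = {x : E | ∀ i, g i x ≤ 0}) (hxb : xb ∈ S)
    (hmin : ∃ U ∈ 𝓝 xb, ∀ x ∈ S ∩ U, f xb ≤ f x) :
    ∃ (lam0 : ℝ) (lam : Fin l → ℝ),
      ¬(lam0 = 0 ∧ ∀ i, lam i = 0) ∧
      lam0 • gradf + ∑ i, lam i • gradg i = 0 ∧
      0 ≤ lam0 ∧ (∀ i, 0 ≤ lam i) ∧
      ∀ i, lam i * g i xb = 0 := by
  classical
  subst hS
  have hxb' : ∀ i, g i xb ≤ 0 := hxb
  set T : Finset (Fin (l+1)) :=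
    insert 0 ((Finset.univ.filter (fun i => g i xb = 0)).image Fin.succ) with hT
  set c : Fin (l+1) → E := Fin.cons gradf gradg with hc
  -- Step A: no strict descent direction for the active gradients
  have hA : ¬ ∃ d : E, ∀ k ∈ T, (inner ℝ (c k) d : ℝ) < 0 := by
    rintro ⟨d, hd⟩
    obtain ⟨U, hU, hUmin⟩ := hmin
    have hdf : (inner ℝ gradf d : ℝ) < 0 := by
      have := hd 0 (Finset.mem_insert_self _ _)
      simpa [hc] using this
    have hEf : ∀ᶠ t in 𝓝[>] (0:ℝ), f (xb + t • d) < f xb := by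
      have h1 := fj_aux_eventually_lt (fj_aux_dirderiv (d := d) hf) hdf
      simpa using h1
    have hEg : ∀ i : Fin l, ∀ᶠ t in 𝓝[>] (0:ℝ), g i (xb + t • d) < 0 := by
      intro i
      by_cases hi : g i xb = 0
      · have hmem : (i.succ : Fin (l+1)) ∈ T := by
          refine Finset.mem_insert_of_mem ?_
          exact Finset.mem_image_of_mem _ (Finset.mem_filter.mpr ⟨Finset.mem_univ _, hi⟩)
        have hdg : (inner ℝ (gradg i) d : ℝ) < 0 := by
          have := hd i.succ hmem
          simpa [hc] using this
        have h1 := fj_aux_eventually_lt (fj_aux_dirderiv (d := d) (hg i)) hdg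
        simp only [zero_smul, add_zero] at h1
        filter_upwards [h1] with t ht
        calc g i (xb + t • d) < g i xb := ht
        _ ≤ 0 := hxb' i
      · have hlt : g i xb < 0 := lt_of_le_of_ne (hxb' i) hi
        have h1 : ContinuousAt (fun t : ℝ => xb + t • d) 0 := by fun_prop
        have h2 : Tendsto (fun t : ℝ => xb + t • d) (𝓝 0) (𝓝 xb) := by
          simpa using h1.tendsto
        have h3 : Tendsto (fun t : ℝ => g i (xb + t • d)) (𝓝 0) (𝓝 (g i xb)) :=
          ((hg i).differentiableAt.continuousAt.tendsto).comp h2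
        exact (h3.eventually_lt_const hlt).filter_mono nhdsWithin_le_nhds
    have hEU : ∀ᶠ t in 𝓝[>] (0:ℝ), xb + t • d ∈ U := by
      have h1 : ContinuousAt (fun t : ℝ => xb + t • d) 0 := by fun_prop
      have := h1.preimage_mem_nhds (by simpa using hU)
      exact (eventually_mem_set.mpr this).filter_mono nhdsWithin_le_nhds
    have hall : ∀ᶠ t in 𝓝[>] (0:ℝ),
        f (xb + t • d) < f xb ∧ (∀ i, g i (xb + t • d) < 0) ∧ xb + t • d ∈ U :=
      hEf.and ((eventually_all.mpr hEg).and hEU)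
    obtain ⟨t, htf, htg, htU⟩ := hall.exists
    have : f xb ≤ f (xb + t • d) :=
      hUmin _ ⟨fun i => (htg i).le, htU⟩
    linarith
  -- Step B: 0 is in the convex hull of the active gradients
  have hB : (0:E) ∈ convexHull ℝ (c '' (T : Set (Fin (l+1)))) := by
    by_contra hB
    obtain ⟨φ, u, hφ0, hφ⟩ := geometric_hahn_banach_point_closed
      (convex_convexHull ℝ _)
      (((T.finite_toSet.image c).isCompact_convexHull ℝ).isClosed) hB
    have hu : (0:ℝ) < u := by simpa using hφ0
    set v := (InnerProductSpace.toDual ℝ E).symm φ with hv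
    refine hA ⟨-v, fun k hk => ?_⟩
    have hφk : φ (c k) = (inner ℝ v (c k) : ℝ) := by
      rw [hv]
      rw [← InnerProductSpace.toDual_apply_apply,
        (InnerProductSpace.toDual ℝ E).apply_symm_apply]
    have hk' : u < φ (c k) :=
      hφ _ (subset_convexHull ℝ _ ⟨k, hk, rfl⟩)
    have : u < (inner ℝ v (c k) : ℝ) := hφk ▸ hk'
    rw [inner_neg_right, real_inner_comm]
    linarith
  -- Extract multipliers
  rw [mem_convexHull_iff_exists_fintype] at hB
  obtain ⟨ι, hι, w, z, hw0, hw1, hzmem, hsum⟩ := hB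
  choose j hjT hjc using fun i => hzmem i
  set lam : Fin (l+1) → ℝ :=
    fun k => ∑ i ∈ Finset.univ.filter (fun i => j i = k), w i with hlam
  have hlam_nonneg : ∀ k, 0 ≤ lam k := fun k =>
    Finset.sum_nonneg fun i _ => hw0 i
  have hlam_sum_one : ∑ k, lam k = 1 := by
    rw [hlam, Finset.sum_fiberwise]
    exact hw1
  have hlam_comb : ∑ k, lam k • c k = 0 := by
    have : ∑ k, lam k • c k = ∑ i, w i • c (j i) := by
      rw [← Finset.sum_fiberwise (g := fun i => j i) (f := fun i => w i • c (j i))]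
      refine Finset.sum_congr rfl fun k _ => ?_
      rw [hlam, Finset.sum_smul]
      refine Finset.sum_congr rfl fun i hi => ?_
      rw [(Finset.mem_filter.mp hi).2]
    rw [this, ← hsum]
    exact Finset.sum_congr rfl fun i _ => by rw [hjc i]
  have hlam_zero_of_not_mem : ∀ k, k ∉ T → lam k = 0 := by
    intro k hk
    rw [hlam]
    refine Finset.sum_eq_zero fun i hi => ?_
    exact absurd ((Finset.mem_filter.mp hi).2 ▸ hjT i) hk
  refine ⟨lam 0, fun i => lam i.succ, ?_, ?_, hlam_nonneg 0,
    fun i => hlam_nonneg i.succ, ?_⟩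
  · rintro ⟨h0, hrest⟩
    have : ∑ k, lam k = 0 := by
      rw [Fin.sum_univ_succ, h0, zero_add]
      exact Finset.sum_eq_zero fun i _ => hrest i
    rw [hlam_sum_one] at this
    exact one_ne_zero this
  · have := hlam_comb
    rw [Fin.sum_univ_succ] at this
    simpa [hc] using this
  · intro i
    by_cases hi : g i xb = 0
    · rw [hi, mul_zero]
    · have : (i.succ : Fin (l+1)) ∉ T := by
        rw [hT]
        simp only [Finset.mem_insert, Finset.mem_image, Finset.mem_filter,
          Finset.mem_univ, true_and]
        push_neg
        refine ⟨Fin.succ_ne_zero i, fun i' hi' => ?_⟩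
        intro h
        exact hi (Fin.succ_injective l h ▸ hi')
      show lam i.succ * g i xb = 0
      rw [hlam_zero_of_not_mem _ this, zero_mul]
end

section
/- (Karush–Kuhn–Tucker conditions) Let E be a finite-dimensional real inner product space, let f : E → ℝ and g_1, …, g_l : E → ℝ be differentiable functions with each g_i convex, let S = {x ∈ E : g_i(x) ≤ 0 for all i = 1, …, l}, and let x̄ ∈ S be a local minimizer of f on S (i.e. there is a neighborhood U of x̄ with f(x̄) ≤ f(x) for all x ∈ S ∩ U). Assume the constraint qualification C_S(x̄) ⊆ convexHull(T_S(x̄)), where C_S(x̄) := {y ∈ E : ⟨grad g_i(x̄), y⟩ ≤ 0 for all i with g_i(x̄) = 0} is the linearization cone. Then there exist real numbers λ_1, …, λ_l such that grad f(x̄) + ∑_{i=1}^l λ_i·grad g_i(x̄) = 0, λ_i ≥ 0 for all i = 1, …, l, and λ_i·g_i(x̄) = 0 for all i = 1, …, l. -/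
open Filter Topology

section FarkasAux

variable {E : Type*} [NormedAddCommGroup E] [InnerProductSpace ℝ E]

/-- Conic Carathéodory: a nonnegative combination over `s` can be rewritten as a
nonnegative combination over a subset `t ⊆ s` on which the vectors are linearly
independent. -/
lemma cone_cara_aux {ι : Type*} [DecidableEq ι] (v : ι → E) :
    ∀ (n : ℕ) (s : Finset ι), s.card ≤ n → ∀ μ : ι → ℝ, (∀ i, 0 ≤ μ i) →
    ∃ t : Finset ι, t ⊆ s ∧ LinearIndependent ℝ (fun i : t => v i) ∧
      ∃ ν : ι → ℝ, (∀ i, 0 ≤ ν i) ∧ ∑ i ∈ t, ν i • v i = ∑ i ∈ s, μ i • v i := by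
  intro n
  induction n with
  | zero =>
    intro s hs μ hμ
    have hse : s = ∅ := Finset.card_eq_zero.mp (Nat.le_zero.mp hs)
    subst hse
    exact ⟨∅, Finset.Subset.refl _, linearIndependent_empty_type, μ, hμ, rfl⟩
  | succ n ih =>
    intro s hs μ hμ
    by_cases hind : LinearIndependent ℝ (fun i : s => v i)
    · exact ⟨s, Finset.Subset.refl _, hind, μ, hμ, rfl⟩
    · obtain ⟨g, hg0, i₁, hi₁⟩ := Fintype.not_linearIndependent_iff.mp hind
      have key : ∃ g' : s → ℝ, ∑ i, g' i • v ↑i = 0 ∧ ∃ i, 0 < g' i := by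
        by_cases hpos : ∃ i, 0 < g i
        · exact ⟨g, hg0, hpos⟩
        · push_neg at hpos
          refine ⟨-g, by simpa using hg0, i₁, ?_⟩
          have := hpos i₁
          simp only [Pi.neg_apply]
          cases lt_or_eq_of_le this with
          | inl h => linarith
          | inr h => exact absurd h hi₁
      obtain ⟨g', hg'0, ⟨ip, hip⟩⟩ := key
      set c : ι → ℝ := fun i => if h : i ∈ s then g' ⟨i, h⟩ else 0 with hc
      have hcs : ∑ i ∈ s, c i • v i = 0 := by
        rw [← Finset.sum_coe_sort s (fun i => c i • v i)]
        rw [← hg'0]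
        apply Finset.sum_congr rfl
        intro i _
        simp [hc, i.2]
      have hT : (s.filter (fun i => 0 < c i)).Nonempty := by
        refine ⟨ip, Finset.mem_filter.mpr ⟨ip.2, ?_⟩⟩
        simp [hc, ip.2, hip]
      obtain ⟨i₀, hi₀T, hmin⟩ := Finset.exists_min_image _ (fun i => μ i / c i) hT
      have hi₀s : i₀ ∈ s := (Finset.mem_filter.mp hi₀T).1
      have hc₀ : 0 < c i₀ := (Finset.mem_filter.mp hi₀T).2
      set r : ℝ := μ i₀ / c i₀ with hr
      have hr0 : 0 ≤ r := div_nonneg (hμ _) hc₀.le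
      set μ' : ι → ℝ := fun i => μ i - r * c i with hμ'def
      have hμ'0 : ∀ i, 0 ≤ μ' i := by
        intro i
        by_cases his : i ∈ s
        · by_cases hci : 0 < c i
          · have hle : r ≤ μ i / c i := hmin i (Finset.mem_filter.mpr ⟨his, hci⟩)
            have := (le_div_iff₀ hci).mp hle
            simp only [hμ'def]
            linarith
          · have h1 : r * c i ≤ 0 := mul_nonpos_of_nonneg_of_nonpos hr0 (not_lt.mp hci)
            have := hμ i
            simp only [hμ'def]
            linarith
        · simp [hμ'def, hc, his, hμ i]
      have hzero : μ' i₀ = 0 := by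
        simp only [hμ'def, hr]
        field_simp
        ring
      have hsum : ∑ i ∈ s, μ' i • v i = ∑ i ∈ s, μ i • v i := by
        simp only [hμ'def, sub_smul, Finset.sum_sub_distrib, mul_smul]
        rw [← Finset.smul_sum, hcs, smul_zero, sub_zero]
      have herase : ∑ i ∈ s.erase i₀, μ' i • v i = ∑ i ∈ s, μ' i • v i :=
        Finset.sum_erase _ (by rw [hzero, zero_smul])
      have hcard : (s.erase i₀).card ≤ n := by
        have h1 := Finset.card_erase_of_mem hi₀s
        have h2 := Finset.card_pos.mpr ⟨i₀, hi₀s⟩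
        omega
      obtain ⟨t, hts, hind', ν, hν, hνsum⟩ := ih (s.erase i₀) hcard μ' hμ'0
      exact ⟨t, hts.trans (Finset.erase_subset _ _), hind', ν, hν, by
        rw [hνsum, herase, hsum]⟩

/-- A finitely generated cone is closed. -/
lemma cone_isClosed [FiniteDimensional ℝ E] {ι : Type*} [Fintype ι] [DecidableEq ι] (v : ι → E) :
    IsClosed {x : E | ∃ μ : ι → ℝ, (∀ i, 0 ≤ μ i) ∧ x = ∑ i, μ i • v i} := by
  have heq : {x : E | ∃ μ : ι → ℝ, (∀ i, 0 ≤ μ i) ∧ x = ∑ i, μ i • v i} =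
      ⋃ t : Finset ι, {x : E | LinearIndependent ℝ (fun i : t => v i) ∧
        ∃ ν : ι → ℝ, (∀ i, 0 ≤ ν i) ∧ x = ∑ i ∈ t, ν i • v i} := by
    ext x
    constructor
    · rintro ⟨μ, hμ, rfl⟩
      obtain ⟨t, -, hind, ν, hν, hsum⟩ :=
        cone_cara_aux v (Finset.univ.card) Finset.univ le_rfl μ hμ
      exact Set.mem_iUnion.mpr ⟨t, hind, ν, hν, hsum.symm⟩
    · intro hx
      obtain ⟨t, hind, ν, hν, rfl⟩ := Set.mem_iUnion.mp hx
      refine ⟨fun i => if i ∈ t then ν i else 0, fun i => ?_, ?_⟩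
      · dsimp only; split
        · exact hν i
        · exact le_refl 0
      · symm
        calc ∑ i : ι, (if i ∈ t then ν i else 0) • v i
            = ∑ i : ι, (if i ∈ t then ν i • v i else 0) := by
              apply Finset.sum_congr rfl; intro i _; split <;> simp
          _ = ∑ i ∈ t, ν i • v i := by rw [Finset.sum_ite_mem, Finset.univ_inter]
  rw [heq]
  apply isClosed_iUnion_of_finite
  intro t
  by_cases hind : LinearIndependent ℝ (fun i : t => v i)
  · let L : (t → ℝ) →ₗ[ℝ] E :=
      { toFun := fun ν => ∑ i, ν i • v ↑i
        map_add' := by intro a b; simp [add_smul, Finset.sum_add_distrib]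
        map_smul' := by intro c a; simp [smul_smul, Finset.smul_sum]
      }
    have hker : LinearMap.ker L = ⊥ := by
      rw [LinearMap.ker_eq_bot']
      intro m hm
      have := Fintype.linearIndependent_iff.mp hind m hm
      funext i
      exact this i
    have hemb := LinearMap.isClosedEmbedding_of_injective hker (f := L)
    have himg : {x : E | LinearIndependent ℝ (fun i : t => v i) ∧
        ∃ ν : ι → ℝ, (∀ i, 0 ≤ ν i) ∧ x = ∑ i ∈ t, ν i • v i} =
        L '' {ν : t → ℝ | ∀ i, 0 ≤ ν i} := by
      ext x
      constructor
      · rintro ⟨-, ν, hν, rfl⟩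
        refine ⟨fun i => ν ↑i, fun i => hν _, ?_⟩
        show ∑ i : t, ν ↑i • v ↑i = _
        rw [Finset.sum_coe_sort t (fun i => ν i • v i)]
      · rintro ⟨ν', hν', rfl⟩
        refine ⟨hind, fun i => if h : i ∈ t then ν' ⟨i, h⟩ else 0, fun i => ?_, ?_⟩
        · dsimp only; split
          · exact hν' _
          · exact le_refl 0
        · show (L ν' : E) = _
          rw [← Finset.sum_coe_sort t
            (fun i => (if h : i ∈ t then ν' ⟨i, h⟩ else 0) • v i)]
          apply Finset.sum_congr rfl
          intro i _
          simp [i.2]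
    rw [himg]
    apply hemb.isClosedMap
    have : {ν : t → ℝ | ∀ i, 0 ≤ ν i} = ⋂ i : t, {ν : t → ℝ | 0 ≤ ν i} := by
      ext ν; simp [Set.mem_iInter]
    rw [this]
    exact isClosed_iInter fun i => isClosed_Ici.preimage (continuous_apply i)
  · have : {x : E | LinearIndependent ℝ (fun i : t => v i) ∧
        ∃ ν : ι → ℝ, (∀ i, 0 ≤ ν i) ∧ x = ∑ i ∈ t, ν i • v i} = ∅ := by
      ext x; simp [hind]
    rw [this]; exact isClosed_empty

/-- Farkas' lemma. -/
lemma farkas_lemma [FiniteDimensional ℝ E] {ι : Type*} [Fintype ι] [DecidableEq ι]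
    (v : ι → E) (c : E)
    (h : ∀ y : E, (∀ i, 0 ≤ (inner ℝ (v i) y : ℝ)) → 0 ≤ (inner ℝ c y : ℝ)) :
    ∃ μ : ι → ℝ, (∀ i, 0 ≤ μ i) ∧ c = ∑ i, μ i • v i := by
  haveI : CompleteSpace E := FiniteDimensional.complete ℝ E
  set K : ConvexCone ℝ E :=
    { carrier := {x | ∃ μ : ι → ℝ, (∀ i, 0 ≤ μ i) ∧ x = ∑ i, μ i • v i}
      smul_mem' := by
        rintro a ha x ⟨μ, hμ, rfl⟩
        exact ⟨fun i => a * μ i, fun i => mul_nonneg ha.le (hμ i), by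
          rw [Finset.smul_sum]; simp [smul_smul]⟩
      add_mem' := by
        rintro x ⟨μ, hμ, rfl⟩ y ⟨μ', hμ', rfl⟩
        exact ⟨fun i => μ i + μ' i, fun i => add_nonneg (hμ i) (hμ' i), by
          rw [← Finset.sum_add_distrib]; simp [add_smul]⟩ } with hK
  by_contra hcon
  have hcK : c ∉ K := fun hmem => hcon hmem
  obtain ⟨y, hy1, hy2⟩ := ProperCone.hyperplane_separation'
    (⟨K.toPointedCone ⟨fun _ => 0, fun i => le_refl 0, by simp⟩, cone_isClosed v⟩ :
      ProperCone ℝ E) hcK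
  have hvy : ∀ i, 0 ≤ (inner ℝ (v i) y : ℝ) := by
    intro i
    refine hy1 (v i) ⟨fun j => if j = i then 1 else 0, fun j => ?_, ?_⟩
    · dsimp only; split
      · exact zero_le_one
      · exact le_refl 0
    · simp [ite_smul]
  have := h y hvy
  linarith

end FarkasAux

/-- Karush–Kuhn–Tucker necessary optimality conditions: if `xb` is a local
minimizer of a differentiable `f` on `S = {x : gᵢ(x) ≤ 0, i = 1,…,l}` with the
`gᵢ` convex and differentiable, and the constraint qualification
`C_S(xb) ⊆ convexHull (T_S(xb))` holds, then there are multipliers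
`λ₁, …, λ_l ≥ 0` with `grad f(xb) + ∑ᵢ λᵢ grad gᵢ(xb) = 0` and
`λᵢ gᵢ(xb) = 0`. -/
theorem kkt_conditions
    {E : Type*} [NormedAddCommGroup E] [InnerProductSpace ℝ E]
    [FiniteDimensional ℝ E]
    (l : ℕ) (f : E → ℝ) (g : Fin l → E → ℝ)
    (gradf : E) (gradg : Fin l → E) (xb : E)
    (hf : HasGradientAt f gradf xb)
    (hg : ∀ i, HasGradientAt (g i) (gradg i) xb)
    (hgconv : ∀ i, ConvexOn ℝ Set.univ (g i))
    (S : Set E) (hS : S = {x : E | ∀ i, g i x ≤ 0}) (hxb : xb ∈ S)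
    (hmin : ∃ U ∈ 𝓝 xb, ∀ x ∈ S ∩ U, f xb ≤ f x)
    (hCQ : {y : E | ∀ i, g i xb = 0 → inner ℝ (gradg i) y ≤ (0 : ℝ)} ⊆
      convexHull ℝ (tangentCone' S xb)) :
    ∃ lam : Fin l → ℝ,
      gradf + ∑ i, lam i • gradg i = 0 ∧
      (∀ i, 0 ≤ lam i) ∧
      ∀ i, lam i * g i xb = 0 := by
  classical
  -- S is convex
  have hSconv : Convex ℝ S := by
    rw [hS]
    have heq : {x : E | ∀ i, g i x ≤ 0} = ⋂ i, {x : E | g i x ≤ 0} := by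
      ext x; simp [Set.mem_iInter]
    rw [heq]
    refine convex_iInter fun i => ?_
    have := (hgconv i).convex_le 0
    simpa [Set.sep_univ] using this
  -- directional optimality on the tangent cone
  have hT : ∀ w ∈ tangentCone' S xb, 0 ≤ (inner ℝ gradf w : ℝ) := by
    intro w hw
    rcases hw with hw | hw
    swap
    · rw [Set.mem_singleton_iff] at hw; subst hw; simp
    obtain ⟨t, ht, hmem⟩ := hw
    set u : E := t • w with hu
    have hxu : xb + u ∈ S := interior_subset hmem
    have hseg : ∀ τ : ℝ, 0 ≤ τ → τ ≤ 1 → xb + τ • u ∈ S := by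
      intro τ h0 h1
      have hmem' := hSconv hxb hxu (by linarith : (0:ℝ) ≤ 1 - τ) h0 (by ring)
      have h2 : xb + τ • u = (1 - τ) • xb + τ • (xb + u) := by
        rw [smul_add, sub_smul, one_smul]; abel
      rw [h2]; exact hmem'
    obtain ⟨U, hU, hUmin⟩ := hmin
    have hcont : Tendsto (fun τ : ℝ => xb + τ • u) (𝓝 0) (𝓝 xb) := by
      have hc : Continuous fun τ : ℝ => xb + τ • u := by continuity
      have h0 : xb + (0:ℝ) • u = xb := by simp
      simpa [h0] using hc.tendsto 0
    have hUev : ∀ᶠ τ : ℝ in 𝓝 0, xb + τ • u ∈ U :=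
      hcont.eventually (eventually_of_mem hU fun x hx => hx)
    have hev : ∀ᶠ τ : ℝ in 𝓝[>] (0:ℝ), f xb ≤ f (xb + τ • u) := by
      have h1 : ∀ᶠ τ : ℝ in 𝓝[>] (0:ℝ), xb + τ • u ∈ U := hUev.filter_mono nhdsWithin_le_nhds
      have h2 : Set.Ioc (0:ℝ) 1 ∈ 𝓝[>] (0:ℝ) :=
        Ioc_mem_nhdsGT_of_mem ⟨le_refl 0, one_pos⟩
      filter_upwards [h1, h2] with τ hτU hτI
      exact hUmin _ ⟨hseg τ hτI.1.le hτI.2, hτU⟩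
    -- derivative of τ ↦ f (xb + τ • u) at 0
    have hF : HasFDerivAt f (InnerProductSpace.toDual ℝ E gradf) xb := hf
    have hc : HasDerivAt (fun τ : ℝ => xb + τ • u) u 0 := by
      simpa using ((hasDerivAt_id (0:ℝ)).smul_const u).const_add xb
    have hF' : HasFDerivAt f (InnerProductSpace.toDual ℝ E gradf) (xb + (0:ℝ) • u) := by
      simpa using hF
    have hd : HasDerivAt (fun τ : ℝ => f (xb + τ • u)) (inner ℝ gradf u : ℝ) 0 := by
      have := hF'.comp_hasDerivAt 0 hc
      exact this
    have hslope := (hd.hasDerivWithinAt (s := Set.Ioi (0:ℝ)))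
    rw [hasDerivWithinAt_iff_tendsto_slope] at hslope
    have hdiff : Set.Ioi (0:ℝ) \ {0} = Set.Ioi (0:ℝ) :=
      Set.diff_singleton_eq_self (by simp)
    rw [hdiff] at hslope
    have hkey : 0 ≤ (inner ℝ gradf u : ℝ) := by
      refine ge_of_tendsto hslope ?_
      filter_upwards [hev, self_mem_nhdsWithin] with τ hfτ hτ
      have hτ0 : (0:ℝ) < τ := hτ
      rw [slope_def_field]
      simp only [zero_smul, add_zero, sub_zero]
      apply div_nonneg (by linarith) (by linarith)
    have hinner : (inner ℝ gradf u : ℝ) = t * (inner ℝ gradf w : ℝ) := by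
      rw [hu, real_inner_smul_right]
    nlinarith [hkey, ht]
  -- extend to convex hull
  have hHull : ∀ y ∈ convexHull ℝ (tangentCone' S xb), 0 ≤ (inner ℝ gradf y : ℝ) := by
    have hconv : Convex ℝ {y : E | 0 ≤ (inner ℝ gradf y : ℝ)} := by
      intro a ha b hb s t hs ht hst
      simp only [Set.mem_setOf_eq, inner_add_right, real_inner_smul_right] at *
      exact add_nonneg (mul_nonneg hs ha) (mul_nonneg ht hb)
    exact fun y hy => convexHull_min hT hconv hy
  -- Farkas
  set w : Fin l → E := fun i => if g i xb = 0 then -(gradg i) else 0 with hw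
  have hfar : ∃ μ : Fin l → ℝ, (∀ i, 0 ≤ μ i) ∧ gradf = ∑ i, μ i • w i := by
    refine farkas_lemma w gradf fun y hy => ?_
    refine hHull y (hCQ ?_)
    intro i hi
    have h1 := hy i
    rw [hw] at h1
    simp only [if_pos hi, inner_neg_left] at h1
    linarith
  obtain ⟨μ, hμ0, hμsum⟩ := hfar
  refine ⟨fun i => if g i xb = 0 then μ i else 0, ?_, fun i => ?_, fun i => ?_⟩
  · have hterm : ∀ i : Fin l,
        μ i • w i + (if g i xb = 0 then μ i else 0) • gradg i = 0 := by
      intro i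
      by_cases hi : g i xb = 0 <;> simp [hw, hi]
    calc gradf + ∑ i, (if g i xb = 0 then μ i else 0) • gradg i
        = ∑ i, μ i • w i + ∑ i, (if g i xb = 0 then μ i else 0) • gradg i := by
          rw [← hμsum]
      _ = ∑ i, (μ i • w i + (if g i xb = 0 then μ i else 0) • gradg i) :=
          (Finset.sum_add_distrib).symm
      _ = 0 := Finset.sum_eq_zero fun i _ => hterm i
  · dsimp only; split
    · exact hμ0 i
    · exact le_refl 0
  · by_cases hi : g i xb = 0
    · rw [hi, mul_zero]
    · simp [hi]
end
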